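/- Let D be a real m×n matrix with singular values σ₁ ≥ σ₂ ≥ … ≥ σ_q ≥ 0 (q = min(m,n)), let λ > 0, and let k ∈ {0,1,…,q} be a minimizer of the function r ↦ r + λ Σᵢ₌ᵣ₊₁^q σᵢ². Then for every real m×n matrix D₀ and every real n×n matrix C satisfying D₀ = D₀ C, the PCE objective satisfies (1/2)‖C‖_F² + (λ/2)‖D − D₀‖_F² ≥ (1/2) k + (λ/2) Σᵢ₌ₖ₊₁^q σᵢ². Consequently the minimal PCE objective value equals (1/2) min_{0 ≤ r ≤ q} ( r + λ Σᵢ₌ᵣ₊₁^q σᵢ² ). -/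

import Mathlib

open Matrix

/-- The Frobenius norm of a real matrix: ‖M‖_F = sqrt(trace(M Mᵀ)). -/
noncomputable def frobeniusNorm {m n : ℕ} (M : Matrix (Fin m) (Fin n) ℝ) : ℝ :=
  Real.sqrt (Matrix.trace (M * Mᵀ))


lemma exists_proj {m n : ℕ} (D₀ : Matrix (Fin m) (Fin n) ℝ) (C : Matrix (Fin n) (Fin n) ℝ)
    (h : D₀ = D₀ * C) :
    ∃ (d : ℕ) (M : Matrix (Fin d) (Fin n) ℝ),
      M * Mᵀ = 1 ∧ M * C = M ∧ D₀ * (Mᵀ * M) = D₀ := by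
  classical
  let W : Submodule ℝ (EuclideanSpace ℝ (Fin n)) :=
    Submodule.span ℝ (Set.range fun i => (WithLp.toLp 2 (D₀ i) : EuclideanSpace ℝ (Fin n)))
  let b := stdOrthonormalBasis ℝ W
  set d := Module.finrank ℝ W with hd
  refine ⟨d, Matrix.of (fun l i => ((b l : EuclideanSpace ℝ (Fin n)) i)), ?_, ?_, ?_⟩
  · -- M * Mᵀ = 1
    ext l l'
    have horto := b.orthonormal
    rw [orthonormal_iff_ite] at horto
    have := horto l l'
    rw [Submodule.coe_inner] at this
    simp only [PiLp.inner_apply, RCLike.inner_apply, conj_trivial] at this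
    simp [Matrix.mul_apply, Matrix.one_apply, ← this]
    exact Finset.sum_congr rfl fun _ _ => mul_comm _ _
  · -- M * C = M
    have key : ∀ v ∈ W, ∀ i, (∑ j, v j * C j i) = v i := by
      intro v hv
      induction hv using Submodule.span_induction with
      | mem x hx =>
        obtain ⟨r, rfl⟩ := hx
        intro i
        have := congrFun (congrFun h r) i
        rw [Matrix.mul_apply] at this
        exact this.symm
      | zero => intro i; simp
      | add x y hx hy ihx ihy =>
        intro i
        have : ∀ j, (x + y) j = x j + y j := fun j => rfl
        simp only [this, add_mul, Finset.sum_add_distrib, ihx i, ihy i]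
      | smul a x hx ihx =>
        intro i
        have : ∀ j, (a • x) j = a * x j := fun j => rfl
        simp only [this, mul_assoc, ← Finset.mul_sum, ihx i]
    ext l i
    simp only [Matrix.mul_apply, Matrix.of_apply]
    exact key _ (b l).2 i
  · -- D₀ * (Mᵀ * M) = D₀
    have key : ∀ v ∈ W, ∀ i, (∑ j, v j * (∑ l, (b l : EuclideanSpace ℝ (Fin n)) j *
        (b l : EuclideanSpace ℝ (Fin n)) i)) = v i := by
      intro v hv i
      set x : W := ⟨v, hv⟩ with hx
      have hrepr := b.sum_repr x
      have hcoord : ∀ l, b.repr x l = ∑ j, (b l : EuclideanSpace ℝ (Fin n)) j * v j := by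
        intro l
        rw [b.repr_apply_apply, Submodule.coe_inner]
        simp [PiLp.inner_apply, RCLike.inner_apply]
        exact Finset.sum_congr rfl fun _ _ => mul_comm _ _
      calc (∑ j, v j * (∑ l, (b l : EuclideanSpace ℝ (Fin n)) j *
              (b l : EuclideanSpace ℝ (Fin n)) i))
          = ∑ l, (∑ j, (b l : EuclideanSpace ℝ (Fin n)) j * v j) *
              (b l : EuclideanSpace ℝ (Fin n)) i := by
            simp only [Finset.mul_sum, Finset.sum_mul]
            rw [Finset.sum_comm]
            congr 1; ext j; congr 1; ext l; ring
        _ = ∑ l, b.repr x l * (b l : EuclideanSpace ℝ (Fin n)) i := by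
            congr 1; ext l; rw [hcoord l]
        _ = v i := by
            have h3 := congrArg (EuclideanSpace.projₗ (𝕜 := ℝ) i ∘ₗ W.subtype) hrepr
            simpa [map_sum, smul_eq_mul] using h3
    ext r i
    simp only [Matrix.mul_apply, Matrix.transpose_apply, Matrix.of_apply]
    have hr : (WithLp.toLp 2 (D₀ r) : EuclideanSpace ℝ (Fin n)) ∈ W := Submodule.subset_span ⟨r, rfl⟩
    have := key _ hr i
    simpa [Matrix.mul_apply, Finset.mul_sum] using this



lemma trace_mul_self_nonneg {a b : ℕ} (A : Matrix (Fin a) (Fin b) ℝ) :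
    0 ≤ Matrix.trace (A * Aᵀ) := by
  simp only [Matrix.trace, Matrix.diag, Matrix.mul_apply, Matrix.transpose_apply]
  exact Finset.sum_nonneg fun i _ => Finset.sum_nonneg fun j _ => mul_self_nonneg _

lemma frob_sq {a b : ℕ} (A : Matrix (Fin a) (Fin b) ℝ) :
    (frobeniusNorm A) ^ 2 = Matrix.trace (A * Aᵀ) :=
  Real.sq_sqrt (trace_mul_self_nonneg A)

lemma trace_diag_mul {a : ℕ} (f : Fin a → ℝ) (B : Matrix (Fin a) (Fin a) ℝ) :
    Matrix.trace (Matrix.diagonal f * B) = ∑ j, f j * B j j := by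
  simp [Matrix.trace, Matrix.diag, Matrix.diagonal_mul]

lemma diag_of_mul_self {a b : ℕ} (A : Matrix (Fin a) (Fin b) ℝ) (j : Fin b) :
    0 ≤ (Aᵀ * A) j j := by
  simp only [Matrix.mul_apply, Matrix.transpose_apply]
  exact Finset.sum_nonneg fun i _ => mul_self_nonneg _

lemma sum_fin_restrict {n q : ℕ} (hqn : q ≤ n) (f : Fin n → ℝ)
    (hf : ∀ j : Fin n, ¬((j : ℕ) < q) → f j = 0) :
    ∑ j, f j = ∑ l : Fin q, f (Fin.castLE hqn l) := by
  have hm : ∑ l : Fin q, f (Fin.castLE hqn l)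
      = ∑ j ∈ Finset.univ.map (Fin.castLEEmb hqn), f j := by
    rw [Finset.sum_map]; rfl
  rw [hm]
  refine (Finset.sum_subset (Finset.subset_univ _) ?_).symm
  intro j _ hj
  refine hf j fun hlt => hj ?_
  simp only [Finset.mem_map, Finset.mem_univ, true_and, Fin.castLEEmb_apply]
  exact ⟨⟨j, hlt⟩, by ext; simp⟩

lemma sum_fin_restrict_le {n q : ℕ} (hqn : q ≤ n) (f : Fin n → ℝ)
    (hf : ∀ j : Fin n, 0 ≤ f j) :
    ∑ l : Fin q, f (Fin.castLE hqn l) ≤ ∑ j, f j := by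
  have hm : ∑ l : Fin q, f (Fin.castLE hqn l)
      = ∑ j ∈ Finset.univ.map (Fin.castLEEmb hqn), f j := by
    rw [Finset.sum_map]; rfl
  rw [hm]
  exact Finset.sum_le_sum_of_subset_of_nonneg (Finset.subset_univ _) fun j _ _ => hf j

lemma card_filt (q r : ℕ) (h : r ≤ q) : (Finset.univ.filter fun i : Fin q => (i:ℕ) < r).card = r := by
  have himg : Finset.image Fin.val (Finset.univ.filter fun i : Fin q => (i:ℕ) < r)
      = Finset.range r := by
    ext x
    simp only [Finset.mem_image, Finset.mem_filter, Finset.mem_univ, true_and, Finset.mem_range]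
    constructor
    · rintro ⟨i, hi, rfl⟩; exact hi
    · intro hx; exact ⟨⟨x, lt_of_lt_of_le hx h⟩, hx, rfl⟩
  calc (Finset.univ.filter fun i : Fin q => (i:ℕ) < r).card
      = (Finset.image Fin.val (Finset.univ.filter fun i : Fin q => (i:ℕ) < r)).card :=
        (Finset.card_image_of_injective _ Fin.val_injective).symm
    _ = r := by rw [himg, Finset.card_range]



lemma sorted_min_sum (q : ℕ) (σ : Fin q → ℝ) (lam : ℝ) (hlam : 0 < lam)
    (hdesc : ∀ i j : Fin q, i ≤ j → σ j ≤ σ i) (hnonneg : ∀ i, 0 ≤ σ i) :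
    ∃ r : ℕ, r ≤ q ∧
      (r : ℝ) + lam * ∑ i ∈ Finset.univ.filter (fun i : Fin q => r ≤ (i : ℕ)), (σ i) ^ 2
        = ∑ i : Fin q, min 1 (lam * σ i ^ 2) := by
  classical
  set S := Finset.univ.filter (fun i : Fin q => 1 ≤ lam * σ i ^ 2) with hS
  refine ⟨S.card, ?_, ?_⟩
  · calc S.card ≤ (Finset.univ : Finset (Fin q)).card := Finset.card_filter_le _ _
      _ = q := by simp
  have hA : ∀ i : Fin q, 1 ≤ lam * σ i ^ 2 → (i : ℕ) < S.card := by
    intro i hi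
    have hsub : (Finset.univ.filter fun j : Fin q => (j:ℕ) < (i:ℕ) + 1) ⊆ S := by
      intro j hj
      rw [hS]
      simp only [Finset.mem_filter, Finset.mem_univ, true_and] at hj ⊢
      have hji : j ≤ i := Fin.le_def.mpr (Nat.lt_succ_iff.mp hj)
      have h1 : σ i ≤ σ j := hdesc j i hji
      have h2 : σ i ^ 2 ≤ σ j ^ 2 := pow_le_pow_left₀ (hnonneg i) h1 2
      calc (1:ℝ) ≤ lam * σ i ^ 2 := hi
        _ ≤ lam * σ j ^ 2 := by nlinarith
    have := Finset.card_le_card hsub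
    rwa [card_filt q ((i:ℕ)+1) i.isLt] at this
  have hB : ∀ i : Fin q, (i : ℕ) < S.card → 1 ≤ lam * σ i ^ 2 := by
    intro i hi
    by_contra hlt
    have hsub : S ⊆ Finset.univ.filter fun j : Fin q => (j:ℕ) < (i:ℕ) := by
      intro j hj
      rw [hS] at hj
      simp only [Finset.mem_filter, Finset.mem_univ, true_and] at hj ⊢
      by_contra hge
      have hij : i ≤ j := Fin.le_def.mpr (not_lt.mp hge)
      have h1 : σ j ≤ σ i := hdesc i j hij
      have h2 : σ j ^ 2 ≤ σ i ^ 2 := pow_le_pow_left₀ (hnonneg j) h1 2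
      have : lam * σ j ^ 2 ≤ lam * σ i ^ 2 := by nlinarith
      exact hlt (le_trans hj this)
    have := Finset.card_le_card hsub
    rw [card_filt q (i:ℕ) i.isLt.le] at this
    omega
  have hstep : ∑ i : Fin q, min 1 (lam * σ i ^ 2)
      = ∑ i : Fin q, (if (i:ℕ) < S.card then (1:ℝ) else lam * σ i ^ 2) := by
    refine Finset.sum_congr rfl fun i _ => ?_
    by_cases h : (i:ℕ) < S.card
    · rw [if_pos h, min_eq_left (hB i h)]
    · rw [if_neg h, min_eq_right (le_of_not_ge fun hc => h (hA i hc))]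
  rw [hstep, Finset.sum_ite, Finset.sum_const, card_filt q S.card
    (by calc S.card ≤ (Finset.univ : Finset (Fin q)).card := Finset.card_filter_le _ _
      _ = q := by simp)]
  have hfilter : (Finset.univ.filter fun i : Fin q => ¬ ((i:ℕ) < S.card))
      = Finset.univ.filter fun i : Fin q => S.card ≤ (i:ℕ) := by simp [not_lt]
  rw [hfilter, Finset.mul_sum]
  simp [nsmul_eq_mul]



lemma key_lower {m n : ℕ} (D : Matrix (Fin m) (Fin n) ℝ) (V : Matrix (Fin n) (Fin n) ℝ)
    (sΛ : Fin n → ℝ) (hV : Vᵀ * V = 1) (hVV : V * Vᵀ = 1)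
    (hDtD : Dᵀ * D = V * (Matrix.diagonal sΛ * Vᵀ))
    (D₀ : Matrix (Fin m) (Fin n) ℝ) (C : Matrix (Fin n) (Fin n) ℝ) (hC : D₀ = D₀ * C) :
    ∃ T : Fin n → ℝ, (∀ j, 0 ≤ T j) ∧ (∀ j, T j ≤ 1) ∧
      (∑ j, T j) ≤ Matrix.trace (C * Cᵀ) ∧
      (∑ j, sΛ j) - (∑ j, sΛ j * T j) ≤ Matrix.trace ((D - D₀) * (D - D₀)ᵀ) := by
  obtain ⟨d, M, hMM, hMC, hDP⟩ := exists_proj D₀ C hC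
  set P : Matrix (Fin n) (Fin n) ℝ := Mᵀ * M with hPdef
  have hPsym : Pᵀ = P := by rw [hPdef, Matrix.transpose_mul, Matrix.transpose_transpose]
  have hPP : P * P = P := by
    rw [hPdef, Matrix.mul_assoc, ← Matrix.mul_assoc M Mᵀ M, hMM, Matrix.one_mul]
  have hQ : (1 - P) * (1 - P) = 1 - P := by
    have : (1 - P) * (1 - P) = 1 - P - P + P * P := by noncomm_ring
    rw [this, hPP]; abel
  have hQsym : (1 - P)ᵀ = 1 - P := by rw [Matrix.transpose_sub, Matrix.transpose_one, hPsym]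
  set T : Matrix (Fin n) (Fin n) ℝ := Vᵀ * (P * V) with hTdef
  have htrP : Matrix.trace P = (d : ℝ) := by
    rw [hPdef, Matrix.trace_mul_comm, hMM, Matrix.trace_one]
    simp
  have htrPC : Matrix.trace (C * P) = (d : ℝ) := by
    rw [Matrix.trace_mul_comm, hPdef, Matrix.mul_assoc, hMC, Matrix.trace_mul_comm, hMM,
      Matrix.trace_one]
    simp
  have hTMV : T = (M * V)ᵀ * (M * V) := by
    rw [hTdef, hPdef, Matrix.transpose_mul]
    simp [Matrix.mul_assoc]
  clear_value P
  clear hPdef hMM hMC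
  refine ⟨fun j => T j j, ?_, ?_, ?_, ?_⟩
  · -- 0 ≤ T j j
    intro j
    rw [hTMV]
    exact diag_of_mul_self (M * V) j
  · -- T j j ≤ 1
    intro j
    have hR : ((1 - P) * V)ᵀ * ((1 - P) * V) = 1 - T := by
      rw [Matrix.transpose_mul, hQsym, Matrix.mul_assoc, ← Matrix.mul_assoc (1 - P) (1 - P) V,
        hQ, Matrix.sub_mul, Matrix.one_mul, Matrix.mul_sub, hV, hTdef]
    have h0 := diag_of_mul_self ((1 - P) * V) j
    rw [hR] at h0
    have : (1 - T) j j = 1 - T j j := by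
      simp [Matrix.sub_apply, Matrix.one_apply_eq]
    linarith [h0, this ▸ h0]
  · -- ∑ T j j ≤ trace (C Cᵀ)
    have hsum : ∑ j, T j j = (d : ℝ) := by
      have : ∑ j, T j j = Matrix.trace T := rfl
      rw [this, hTdef, Matrix.trace_mul_comm, Matrix.mul_assoc, hVV, Matrix.mul_one, htrP]
    have htrPCt : Matrix.trace (P * Cᵀ) = (d : ℝ) := by
      have : P * Cᵀ = (C * P)ᵀ := by rw [Matrix.transpose_mul, hPsym]
      rw [this, Matrix.trace_transpose, htrPC]
    have htrPPt : Matrix.trace (P * Pᵀ) = (d : ℝ) := by rw [hPsym, hPP, htrP]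
    have h0 := trace_mul_self_nonneg (C - P)
    have hexp : (C - P) * (C - P)ᵀ = C * Cᵀ - C * Pᵀ - P * Cᵀ + P * Pᵀ := by
      rw [Matrix.transpose_sub]; noncomm_ring
    rw [hexp] at h0
    rw [Matrix.trace_add, Matrix.trace_sub, Matrix.trace_sub, hPsym] at h0
    rw [hPsym] at htrPPt
    linarith [hsum, htrPC, htrPCt, htrPPt, h0]
  · -- error bound
    set A : Matrix (Fin m) (Fin n) ℝ := D - D₀ with hAdef
    have hsplit : A * Aᵀ = (A * P) * (A * P)ᵀ + (A * (1 - P)) * (A * (1 - P))ᵀ := by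
      have e1 : P * Pᵀ + (1 - P) * (1 - P)ᵀ = 1 := by
        rw [hPsym, hQsym, hPP, hQ]; abel
      calc A * Aᵀ = A * ((P * Pᵀ + (1 - P) * (1 - P)ᵀ) * Aᵀ) := by
            rw [e1, Matrix.one_mul]
        _ = A * (P * (Pᵀ * Aᵀ)) + A * ((1 - P) * ((1 - P)ᵀ * Aᵀ)) := by
            rw [Matrix.add_mul, Matrix.mul_add]; simp only [Matrix.mul_assoc]
        _ = (A * P) * (A * P)ᵀ + (A * (1 - P)) * (A * (1 - P))ᵀ := by
            rw [Matrix.transpose_mul, Matrix.transpose_mul]; simp only [Matrix.mul_assoc]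
    have hineq : Matrix.trace ((A * (1 - P)) * (A * (1 - P))ᵀ) ≤ Matrix.trace (A * Aᵀ) := by
      rw [hsplit, Matrix.trace_add]
      linarith [trace_mul_self_nonneg (A * P)]
    have hD₀Q : D₀ * (1 - P) = 0 := by
      rw [Matrix.mul_sub, Matrix.mul_one, hDP, sub_self]
    have hAP : A * (1 - P) = D * (1 - P) := by
      rw [hAdef, Matrix.sub_mul, hD₀Q, sub_zero]
    have hDE : Matrix.trace ((D * (1 - P)) * (D * (1 - P))ᵀ) =
        (∑ j, sΛ j) - (∑ j, sΛ j * T j j) := by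
      have e2 : (D * (1 - P)) * (D * (1 - P))ᵀ = D * Dᵀ - D * (P * Dᵀ) := by
        rw [Matrix.transpose_mul, hQsym, Matrix.mul_assoc,
          ← Matrix.mul_assoc (1 - P) (1 - P) Dᵀ, hQ, Matrix.sub_mul, Matrix.one_mul,
          Matrix.mul_sub]
      have e3 : Matrix.trace (D * Dᵀ) = ∑ j, sΛ j := by
        rw [Matrix.trace_mul_comm, hDtD, Matrix.trace_mul_comm, Matrix.mul_assoc, hV,
          Matrix.mul_one, Matrix.trace_diagonal]
      have e4 : Matrix.trace (D * (P * Dᵀ)) = ∑ j, sΛ j * T j j := by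
        rw [Matrix.trace_mul_comm, Matrix.mul_assoc, Matrix.trace_mul_comm, hDtD,
          Matrix.mul_assoc, Matrix.trace_mul_comm, Matrix.mul_assoc, Matrix.mul_assoc,
          trace_diag_mul]
      rw [e2, Matrix.trace_sub, e3, e4]
    rw [hAP] at hineq
    rw [hDE] at hineq
    exact hineq

/-- Let D be a real m×n matrix with singular values
σ₁ ≥ … ≥ σ_q ≥ 0 (q = min(m,n), given via a full SVD D = U Σ Vᵀ), let λ > 0,
and let k ∈ {0,…,q} minimize r ↦ r + λ Σ_{i=r+1}^{q} σᵢ². Then every feasible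
pair (C, D₀) with D₀ = D₀ C satisfies
(1/2)‖C‖_F² + (λ/2)‖D − D₀‖_F² ≥ (1/2) k + (λ/2) Σ_{i=k+1}^{q} σᵢ²,
and consequently the minimal PCE objective value equals
(1/2) min_{0 ≤ r ≤ q} (r + λ Σ_{i=r+1}^{q} σᵢ²). -/
theorem stmt_12 {m n : ℕ}
    (D : Matrix (Fin m) (Fin n) ℝ)
    (U : Matrix (Fin m) (Fin m) ℝ) (Sig : Matrix (Fin m) (Fin n) ℝ)
    (V : Matrix (Fin n) (Fin n) ℝ)
    (σ : Fin (min m n) → ℝ)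
    (hSVD : D = U * Sig * Vᵀ)
    (hU : Uᵀ * U = 1) (hV : Vᵀ * V = 1)
    (hSigdiag : ∀ (i : Fin m) (j : Fin n), (i : ℕ) ≠ (j : ℕ) → Sig i j = 0)
    (hσ : ∀ i : Fin (min m n),
      σ i = Sig ⟨i, lt_of_lt_of_le i.isLt (min_le_left m n)⟩
              ⟨i, lt_of_lt_of_le i.isLt (min_le_right m n)⟩)
    (hdesc : ∀ i j : Fin (min m n), i ≤ j → σ j ≤ σ i)
    (hnonneg : ∀ i : Fin (min m n), 0 ≤ σ i)
    (lam : ℝ) (hlam : 0 < lam)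
    (k : ℕ) (hkq : k ≤ min m n)
    (hkmin : ∀ r : ℕ, r ≤ min m n →
      (k : ℝ) + lam * ∑ i ∈ Finset.univ.filter (fun i : Fin (min m n) => k ≤ (i : ℕ)), (σ i) ^ 2 ≤
      (r : ℝ) + lam * ∑ i ∈ Finset.univ.filter (fun i : Fin (min m n) => r ≤ (i : ℕ)), (σ i) ^ 2) :
    (∀ (D₀ : Matrix (Fin m) (Fin n) ℝ) (C : Matrix (Fin n) (Fin n) ℝ),
      D₀ = D₀ * C →
      (1 / 2) * (frobeniusNorm C) ^ 2 + (lam / 2) * (frobeniusNorm (D - D₀)) ^ 2 ≥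
        (1 / 2) * (k : ℝ) +
          (lam / 2) *
            ∑ i ∈ Finset.univ.filter (fun i : Fin (min m n) => k ≤ (i : ℕ)), (σ i) ^ 2) ∧
    IsLeast
      { v : ℝ | ∃ (D₀ : Matrix (Fin m) (Fin n) ℝ) (C : Matrix (Fin n) (Fin n) ℝ),
          D₀ = D₀ * C ∧
          v = (1 / 2) * (frobeniusNorm C) ^ 2 + (lam / 2) * (frobeniusNorm (D - D₀)) ^ 2 }
      ((1 / 2) *
        ((k : ℝ) +
          lam * ∑ i ∈ Finset.univ.filter (fun i : Fin (min m n) => k ≤ (i : ℕ)), (σ i) ^ 2)) := by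
  classical
  have hqm : min m n ≤ m := min_le_left m n
  have hqn : min m n ≤ n := min_le_right m n
  have hVV : V * Vᵀ = 1 := mul_eq_one_comm.mp hV
  have hUU : U * Uᵀ = 1 := mul_eq_one_comm.mp hU
  set sΛ : Fin n → ℝ := fun j => ∑ i, (Sig i j) ^ 2 with hsΛ
  have hsnn : ∀ j, 0 ≤ sΛ j := fun j => Finset.sum_nonneg fun i _ => sq_nonneg _
  have hL1 : ∀ (j : Fin n) (h : (j:ℕ) < min m n), sΛ j = σ ⟨(j:ℕ), h⟩ ^ 2 := by
    intro j h
    have hjm : (j:ℕ) < m := lt_of_lt_of_le h hqm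
    have h1 : sΛ j = Sig ⟨(j:ℕ), hjm⟩ j ^ 2 := by
      rw [hsΛ]
      refine Finset.sum_eq_single (M := ℝ) (⟨(j:ℕ), hjm⟩ : Fin m) (fun i _ hne => ?_)
        (fun h' => absurd (Finset.mem_univ _) h')
      have : (i:ℕ) ≠ (j:ℕ) := fun hc => hne (Fin.ext hc)
      rw [hSigdiag i j this]
      ring
    rw [h1, hσ ⟨(j:ℕ), h⟩]
  have hL2 : ∀ j : Fin n, ¬((j:ℕ) < min m n) → sΛ j = 0 := by
    intro j h
    rw [hsΛ]
    refine Finset.sum_eq_zero fun i _ => ?_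
    have him : (i:ℕ) < m := i.isLt
    have : (i:ℕ) ≠ (j:ℕ) := by omega
    rw [hSigdiag i j this]
    ring
  have hL0 : Sigᵀ * Sig = Matrix.diagonal sΛ := by
    ext j j'
    by_cases hjj : j = j'
    · subst hjj
      simp [Matrix.mul_apply, Matrix.diagonal_apply_eq, hsΛ, sq]
    · rw [Matrix.diagonal_apply_ne _ hjj]
      simp only [Matrix.mul_apply, Matrix.transpose_apply]
      refine Finset.sum_eq_zero fun i _ => ?_
      rcases eq_or_ne (i:ℕ) (j:ℕ) with h|h
      · have hne : (i:ℕ) ≠ (j':ℕ) := by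
          intro hc
          exact hjj (Fin.ext (by omega))
        rw [hSigdiag i j' hne, mul_zero]
      · rw [hSigdiag i j h, zero_mul]
  have hSVD' : D = U * (Sig * Vᵀ) := by rw [hSVD, Matrix.mul_assoc]
  have hDtD : Dᵀ * D = V * (Matrix.diagonal sΛ * Vᵀ) := by
    rw [hSVD']
    have ht : (U * (Sig * Vᵀ))ᵀ = V * (Sigᵀ * Uᵀ) := by
      rw [Matrix.transpose_mul, Matrix.transpose_mul, Matrix.transpose_transpose,
        Matrix.mul_assoc]
    rw [ht]
    calc V * (Sigᵀ * Uᵀ) * (U * (Sig * Vᵀ))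
        = V * (Sigᵀ * ((Uᵀ * U) * (Sig * Vᵀ))) := by simp only [Matrix.mul_assoc]
      _ = V * (Sigᵀ * (Sig * Vᵀ)) := by rw [hU, Matrix.one_mul]
      _ = V * (Matrix.diagonal sΛ * Vᵀ) := by rw [← Matrix.mul_assoc Sigᵀ Sig, hL0]
  -- Part 1: the lower bound
  have lower : ∀ (D₀ : Matrix (Fin m) (Fin n) ℝ) (C : Matrix (Fin n) (Fin n) ℝ),
      D₀ = D₀ * C →
      (1 / 2) * (frobeniusNorm C) ^ 2 + (lam / 2) * (frobeniusNorm (D - D₀)) ^ 2 ≥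
        (1 / 2) * (k : ℝ) +
          (lam / 2) *
            ∑ i ∈ Finset.univ.filter (fun i : Fin (min m n) => k ≤ (i : ℕ)), (σ i) ^ 2 := by
    intro D₀ C hC
    obtain ⟨T, hT0, hT1, hTC, hTD⟩ := key_lower D V sΛ hV hVV hDtD D₀ C hC
    obtain ⟨r, hrq, hrval⟩ := sorted_min_sum (min m n) σ lam hlam hdesc hnonneg
    have hkr := hkmin r hrq
    have hcast : ∀ l : Fin (min m n), sΛ (Fin.castLE hqn l) = σ l ^ 2 := by
      intro l
      have h : ((Fin.castLE hqn l : Fin n) : ℕ) < min m n := l.isLt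
      rw [hL1 _ h]
      exact congrArg (fun x => σ x ^ 2) (Fin.ext rfl)
    have hchain1 : ∑ i : Fin (min m n), min 1 (lam * σ i ^ 2) ≤
        ∑ j : Fin n, min 1 (lam * sΛ j) := by
      have := sum_fin_restrict_le hqn (fun j => min 1 (lam * sΛ j))
        (fun j => le_min zero_le_one (by positivity))
      refine le_trans (le_of_eq ?_) this
      refine Finset.sum_congr rfl fun l _ => ?_
      simp only [hcast]
    have hchain2 : ∑ j : Fin n, min 1 (lam * sΛ j) ≤
        ∑ j : Fin n, (T j + lam * (sΛ j * (1 - T j))) := by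
      refine Finset.sum_le_sum fun j _ => ?_
      rcases le_total (lam * sΛ j) 1 with h|h
      · rw [min_eq_right h]
        nlinarith [hT0 j, hT1 j, hsnn j]
      · rw [min_eq_left h]
        nlinarith [hT0 j, hT1 j, hsnn j]
    have hchain3 : ∑ j : Fin n, (T j + lam * (sΛ j * (1 - T j)))
        = (∑ j, T j) + lam * ((∑ j, sΛ j) - (∑ j, sΛ j * T j)) := by
      rw [Finset.sum_add_distrib, ← Finset.mul_sum, ← Finset.sum_sub_distrib]
      congr 2
      · exact Finset.sum_congr rfl fun j _ => by ring
    have hchain4 : (∑ j, T j) + lam * ((∑ j, sΛ j) - (∑ j, sΛ j * T j)) ≤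
        Matrix.trace (C * Cᵀ) + lam * Matrix.trace ((D - D₀) * (D - D₀)ᵀ) :=
      add_le_add hTC (mul_le_mul_of_nonneg_left hTD hlam.le)
    rw [ge_iff_le, frob_sq, frob_sq]
    have htot : (k : ℝ) +
        lam * ∑ i ∈ Finset.univ.filter (fun i : Fin (min m n) => k ≤ (i : ℕ)), (σ i) ^ 2 ≤
        Matrix.trace (C * Cᵀ) + lam * Matrix.trace ((D - D₀) * (D - D₀)ᵀ) := by
      calc (k : ℝ) + lam * ∑ i ∈ Finset.univ.filter
            (fun i : Fin (min m n) => k ≤ (i : ℕ)), (σ i) ^ 2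
          ≤ (r : ℝ) + lam * ∑ i ∈ Finset.univ.filter
            (fun i : Fin (min m n) => r ≤ (i : ℕ)), (σ i) ^ 2 := hkr
        _ = ∑ i : Fin (min m n), min 1 (lam * σ i ^ 2) := hrval
        _ ≤ ∑ j : Fin n, min 1 (lam * sΛ j) := hchain1
        _ ≤ ∑ j : Fin n, (T j + lam * (sΛ j * (1 - T j))) := hchain2
        _ = (∑ j, T j) + lam * ((∑ j, sΛ j) - (∑ j, sΛ j * T j)) := hchain3
        _ ≤ _ := hchain4
    linarith
  refine ⟨lower, ?_⟩
  rw [IsLeast]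
  refine ⟨?_, ?_⟩

  · -- membership: the optimum is attained
    set g : Fin n → ℝ := fun j => if (j:ℕ) < k then 1 else 0 with hg
    set Pk : Matrix (Fin n) (Fin n) ℝ := Matrix.diagonal g with hPk
    have hPk2 : Pk * Pk = Pk := by
      have hgg : (fun j => g j * g j) = g := by
        funext j
        by_cases h : (j:ℕ) < k <;> simp [hg, h]
      rw [hPk, Matrix.diagonal_mul_diagonal, hgg]
    have hPkT : Pkᵀ = Pk := by rw [hPk, Matrix.diagonal_transpose]
    have hVcan : ∀ p : ℕ, ∀ X : Matrix (Fin n) (Fin p) ℝ, Vᵀ * (V * X) = X := by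
      intro p X
      rw [← Matrix.mul_assoc, hV, Matrix.one_mul]
    set C₀ : Matrix (Fin n) (Fin n) ℝ := V * (Pk * Vᵀ) with hC₀
    set D₀ : Matrix (Fin m) (Fin n) ℝ := U * (Sig * (Pk * Vᵀ)) with hD₀
    have hfeas : D₀ = D₀ * C₀ := by
      rw [hD₀, hC₀]
      calc U * (Sig * (Pk * Vᵀ))
          = U * (Sig * (Pk * (Vᵀ * (V * (Pk * Vᵀ))))) := by
            rw [hVcan _ (Pk * Vᵀ), ← Matrix.mul_assoc Pk Pk Vᵀ, hPk2]
        _ = U * (Sig * (Pk * Vᵀ)) * (V * (Pk * Vᵀ)) := by simp only [Matrix.mul_assoc]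
    have hC₀T : C₀ᵀ = C₀ := by
      rw [hC₀, Matrix.transpose_mul, Matrix.transpose_mul, Matrix.transpose_transpose,
        hPkT, Matrix.mul_assoc]
    have hfC : Matrix.trace (C₀ * C₀ᵀ) = (k : ℝ) := by
      have h1 : C₀ * C₀ᵀ = V * (Pk * Vᵀ) := by
        rw [hC₀T, hC₀]
        calc V * (Pk * Vᵀ) * (V * (Pk * Vᵀ))
            = V * (Pk * (Vᵀ * (V * (Pk * Vᵀ)))) := by simp only [Matrix.mul_assoc]
          _ = V * (Pk * Vᵀ) := by
              rw [hVcan _ (Pk * Vᵀ), ← Matrix.mul_assoc Pk Pk Vᵀ, hPk2]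
      rw [h1, Matrix.trace_mul_comm, Matrix.mul_assoc, hV, Matrix.mul_one, hPk,
        Matrix.trace_diagonal, hg]
      have : ∑ j : Fin n, (if (j:ℕ) < k then (1:ℝ) else 0)
          = ((Finset.univ.filter fun j : Fin n => (j:ℕ) < k).card : ℝ) := by
        rw [Finset.sum_boole]
      rw [this, card_filt n k (le_trans hkq hqn)]
    have hQk : (1 - Pk) * (1 - Pk) = 1 - Pk := by
      have : (1 - Pk) * (1 - Pk) = 1 - Pk - Pk + Pk * Pk := by noncomm_ring
      rw [this, hPk2]; abel
    have hQkT : (1 - Pk)ᵀ = 1 - Pk := by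
      rw [Matrix.transpose_sub, Matrix.transpose_one, hPkT]
    have hdiff : D - D₀ = U * (Sig * ((1 - Pk) * Vᵀ)) := by
      rw [hSVD', hD₀, Matrix.sub_mul, Matrix.one_mul, Matrix.mul_sub, Matrix.mul_sub]
    have hfD : Matrix.trace ((D - D₀) * (D - D₀)ᵀ)
        = ∑ i ∈ Finset.univ.filter (fun i : Fin (min m n) => k ≤ (i : ℕ)), (σ i) ^ 2 := by
      have ht : (U * (Sig * ((1 - Pk) * Vᵀ)))ᵀ = V * ((1 - Pk) * (Sigᵀ * Uᵀ)) := by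
        rw [Matrix.transpose_mul, Matrix.transpose_mul, Matrix.transpose_mul,
          Matrix.transpose_transpose, hQkT]
        simp only [Matrix.mul_assoc]
      have h2 : (D - D₀) * (D - D₀)ᵀ = U * (Sig * ((1 - Pk) * (Sigᵀ * Uᵀ))) := by
        rw [hdiff, ht]
        calc U * (Sig * ((1 - Pk) * Vᵀ)) * (V * ((1 - Pk) * (Sigᵀ * Uᵀ)))
            = U * (Sig * ((1 - Pk) * (Vᵀ * (V * ((1 - Pk) * (Sigᵀ * Uᵀ)))))) := by
              simp only [Matrix.mul_assoc]
          _ = U * (Sig * (((1 - Pk) * (1 - Pk)) * (Sigᵀ * Uᵀ))) := by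
              rw [hVcan _ ((1 - Pk) * (Sigᵀ * Uᵀ))]
              simp only [Matrix.mul_assoc]
          _ = U * (Sig * ((1 - Pk) * (Sigᵀ * Uᵀ))) := by rw [hQk]
      have h3 : Matrix.trace ((D - D₀) * (D - D₀)ᵀ)
          = Matrix.trace ((1 - Pk) * Matrix.diagonal sΛ) := by
        rw [h2, Matrix.trace_mul_comm]
        calc Matrix.trace (Sig * ((1 - Pk) * (Sigᵀ * Uᵀ)) * U)
            = Matrix.trace (Sig * ((1 - Pk) * (Sigᵀ * (Uᵀ * U)))) := by
              simp only [Matrix.mul_assoc]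
          _ = Matrix.trace (Sig * ((1 - Pk) * Sigᵀ)) := by rw [hU, Matrix.mul_one]
          _ = Matrix.trace ((1 - Pk) * Sigᵀ * Sig) := by
              rw [Matrix.trace_mul_comm, Matrix.mul_assoc]
          _ = Matrix.trace ((1 - Pk) * Matrix.diagonal sΛ) := by
              rw [Matrix.mul_assoc, hL0]
      have h4 : (1 : Matrix (Fin n) (Fin n) ℝ) - Pk
          = Matrix.diagonal (fun j => 1 - g j) := by
        rw [hPk, ← Matrix.diagonal_one, Matrix.diagonal_sub]
      rw [h3, h4, trace_diag_mul]
      have h5 : ∀ j : Fin n, (1 - g j) * (Matrix.diagonal sΛ) j j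
          = (fun j : Fin n => (1 - g j) * sΛ j) j := by
        intro j; rw [Matrix.diagonal_apply_eq]
      rw [Finset.sum_congr rfl fun j _ => h5 j]
      rw [sum_fin_restrict hqn (fun j => (1 - g j) * sΛ j)
        (fun j hj => by simp only [hL2 j hj, mul_zero])]
      have h6 : ∀ l : Fin (min m n), (1 - g (Fin.castLE hqn l)) * sΛ (Fin.castLE hqn l)
          = if (l:ℕ) < k then 0 else σ l ^ 2 := by
        intro l
        have h : ((Fin.castLE hqn l : Fin n) : ℕ) < min m n := l.isLt
        rw [hL1 _ h, hg]
        by_cases hc : (l:ℕ) < k <;> simp [hc]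
      rw [Finset.sum_congr rfl fun l _ => h6 l, Finset.sum_ite, Finset.sum_const_zero,
        zero_add]
      congr 1
      simp [not_lt]
    refine ⟨D₀, C₀, hfeas, ?_⟩
    rw [frob_sq, frob_sq, hfC, hfD]
    ring
  · -- lower bound for IsLeast
    rintro v ⟨D₀, C, hfeas, rfl⟩
    have := lower D₀ C hfeas
    rw [ge_iff_le] at this
    linarith
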